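/- Fix integers r ≥ 3 and d ≥ 2, and indices 1 ≤ j < i ≤ d. In R = k[a_1,…,a_d,b_1,…,b_d,e_1,…,e_{2r−2}], let J be the ideal generated by the monomials {a_k b_l : j < l < k ≤ d} ∪ {a_k b_j : i < k ≤ d} (these are exactly the elements of F_d = {a_k b_l : 1 ≤ l < k ≤ d} that precede a_i b_j in the stated ordering). Then the ideal quotient J : ⟨a_i b_j⟩ equals the ideal generated by the variables a_{i+1}, …, a_d, b_{j+1}, …, b_{i−1}; in particular it is generated by exactly d − j − 1 variables. -/

import Mathlib

open MvPolynomial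

/-- The edge variables of `G_{r,d}`: `a_1, …, a_d`, `b_1, …, b_d` and
`e_1, …, e_{2r-2}`.  We use 1-based names via 0-based `Fin` indices:
`EVar.a ⟨i-1,_⟩` is `a_i`, etc. -/
inductive EVar (d r : ℕ) : Type where
  | a : Fin d → EVar d r
  | b : Fin d → EVar d r
  | e : Fin (2 * r - 2) → EVar d r
deriving DecidableEq

/-- Fix `r ≥ 3`, `d ≥ 2` and indices `1 ≤ j < i ≤ d`.  In
`R = k[a_1,…,a_d,b_1,…,b_d,e_1,…,e_{2r-2}]`, let `J` be the ideal generated by the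
monomials `{a_k b_l : j < l < k ≤ d} ∪ {a_k b_j : i < k ≤ d}` (exactly the elements
of `F_d` preceding `a_i b_j` in the stated ordering).  Then the ideal quotient
`J : ⟨a_i b_j⟩` is the ideal generated by the variables
`a_{i+1}, …, a_d, b_{j+1}, …, b_{i-1}`; in particular the generating set consists
of exactly `d − j − 1` variables. -/
theorem colon_ideal_Fd_case (k : Type) [Field k] (d r : ℕ) (hd : 2 ≤ d) (hr : 3 ≤ r)
    (i j : ℕ) (hj : 1 ≤ j) (hji : j < i) (hid : i ≤ d) :
    (Ideal.span
        ({p : MvPolynomial (EVar d r) k | ∃ l m : ℕ, ∃ (_ : j < l) (_ : l < m) (_ : m ≤ d),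
            p = X (EVar.a ⟨m - 1, by omega⟩) * X (EVar.b ⟨l - 1, by omega⟩)} ∪
         {p : MvPolynomial (EVar d r) k | ∃ m : ℕ, ∃ (_ : i < m) (_ : m ≤ d),
            p = X (EVar.a ⟨m - 1, by omega⟩) * X (EVar.b ⟨j - 1, by omega⟩)})).colon
      ((Ideal.span {X (EVar.a (⟨i - 1, by omega⟩ : Fin d)) * X (EVar.b (⟨j - 1, by omega⟩ : Fin d))} :
        Ideal (MvPolynomial (EVar d r) k)) : Set (MvPolynomial (EVar d r) k)) =
    Ideal.span
      ({p : MvPolynomial (EVar d r) k | ∃ m : ℕ, ∃ (_ : i < m) (_ : m ≤ d),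
          p = X (EVar.a ⟨m - 1, by omega⟩)} ∪
       {p : MvPolynomial (EVar d r) k | ∃ l : ℕ, ∃ (_ : j < l) (_ : l < i),
          p = X (EVar.b ⟨l - 1, by omega⟩)}) ∧
    ({p : MvPolynomial (EVar d r) k | ∃ m : ℕ, ∃ (_ : i < m) (_ : m ≤ d),
          p = X (EVar.a ⟨m - 1, by omega⟩)} ∪
       {p : MvPolynomial (EVar d r) k | ∃ l : ℕ, ∃ (_ : j < l) (_ : l < i),
          p = X (EVar.b ⟨l - 1, by omega⟩)}).ncard = d - j - 1 := by
  -- basic notation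
  have hXX : ∀ u v : EVar d r, (X u * X v : MvPolynomial (EVar d r) k)
      = monomial (Finsupp.single u 1 + Finsupp.single v 1) 1 := fun u v => by
    rw [X, X, monomial_mul, one_mul]
  -- the set of generating exponents of J
  set S : Set (EVar d r →₀ ℕ) :=
    {s | ∃ l m : ℕ, ∃ (_ : j < l) (_ : l < m) (_ : m ≤ d),
        s = Finsupp.single (EVar.a ⟨m - 1, by omega⟩) 1
          + Finsupp.single (EVar.b ⟨l - 1, by omega⟩) 1} ∪
    {s | ∃ m : ℕ, ∃ (_ : i < m) (_ : m ≤ d),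
        s = Finsupp.single (EVar.a ⟨m - 1, by omega⟩) 1
          + Finsupp.single (EVar.b ⟨j - 1, by omega⟩) 1} with hS
  -- the set of variables generating the colon ideal
  set V : Set (EVar d r) :=
    {v | ∃ m : ℕ, ∃ (_ : i < m) (_ : m ≤ d), v = EVar.a ⟨m - 1, by omega⟩} ∪
    {v | ∃ l : ℕ, ∃ (_ : j < l) (_ : l < i), v = EVar.b ⟨l - 1, by omega⟩} with hV
  have hJ : ({p : MvPolynomial (EVar d r) k | ∃ l m : ℕ, ∃ (_ : j < l) (_ : l < m) (_ : m ≤ d),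
            p = X (EVar.a ⟨m - 1, by omega⟩) * X (EVar.b ⟨l - 1, by omega⟩)} ∪
         {p : MvPolynomial (EVar d r) k | ∃ m : ℕ, ∃ (_ : i < m) (_ : m ≤ d),
            p = X (EVar.a ⟨m - 1, by omega⟩) * X (EVar.b ⟨j - 1, by omega⟩)}) =
      (fun s => monomial s (1 : k)) '' S := by
    ext p
    simp only [hS, Set.mem_union, Set.mem_setOf_eq, Set.mem_image, hXX]
    constructor
    · rintro (⟨l, m, h1, h2, h3, rfl⟩ | ⟨m, h1, h2, rfl⟩)
      · exact ⟨_, Or.inl ⟨l, m, h1, h2, h3, rfl⟩, rfl⟩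
      · exact ⟨_, Or.inr ⟨m, h1, h2, rfl⟩, rfl⟩
    · rintro ⟨s, (⟨l, m, h1, h2, h3, rfl⟩ | ⟨m, h1, h2, rfl⟩), rfl⟩
      · exact Or.inl ⟨l, m, h1, h2, h3, rfl⟩
      · exact Or.inr ⟨m, h1, h2, rfl⟩
  have hVset : ({p : MvPolynomial (EVar d r) k | ∃ m : ℕ, ∃ (_ : i < m) (_ : m ≤ d),
          p = X (EVar.a ⟨m - 1, by omega⟩)} ∪
       {p : MvPolynomial (EVar d r) k | ∃ l : ℕ, ∃ (_ : j < l) (_ : l < i),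
          p = X (EVar.b ⟨l - 1, by omega⟩)}) = X '' V := by
    ext p
    simp only [hV, Set.mem_union, Set.mem_setOf_eq, Set.mem_image]
    constructor
    · rintro (⟨m, h1, h2, rfl⟩ | ⟨l, h1, h2, rfl⟩)
      · exact ⟨_, Or.inl ⟨m, h1, h2, rfl⟩, rfl⟩
      · exact ⟨_, Or.inr ⟨l, h1, h2, rfl⟩, rfl⟩
    · rintro ⟨v, (⟨m, h1, h2, rfl⟩ | ⟨l, h1, h2, rfl⟩), rfl⟩
      · exact Or.inl ⟨m, h1, h2, rfl⟩
      · exact Or.inr ⟨l, h1, h2, rfl⟩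
  constructor
  · -- ideal equality
    rw [hJ, hVset]
    ext f
    rw [Ideal.mem_colon_span_singleton, ← mul_assoc, mem_ideal_span_monomial_image,
      mem_ideal_span_X_image, support_mul_X, support_mul_X]
    simp only [Finset.mem_map, Function.Embedding.coeFn_mk, addRightEmbedding_apply]
    constructor
    · intro H u hu
      obtain ⟨s, hs, hle⟩ := H (u + Finsupp.single (EVar.a ⟨i - 1, by omega⟩) 1
          + Finsupp.single (EVar.b ⟨j - 1, by omega⟩) 1)
        ⟨u + Finsupp.single (EVar.a ⟨i - 1, by omega⟩) 1, ⟨u, hu, rfl⟩, rfl⟩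
      rw [Finsupp.le_def] at hle
      rcases hs with ⟨l, m, h1, h2, h3, rfl⟩ | ⟨m, h1, h2, rfl⟩
      · by_cases hli : l < i
        · refine ⟨EVar.b ⟨l - 1, by omega⟩, Or.inr ⟨l, h1, hli, rfl⟩, ?_⟩
          have := hle (EVar.b ⟨l - 1, by omega⟩)
          simp only [Finsupp.add_apply, Finsupp.single_apply, EVar.a.injEq, EVar.b.injEq,
            Fin.mk.injEq, reduceCtorEq, if_true, if_false, ite_true, ite_false] at this
          split_ifs at this <;> omega
        · refine ⟨EVar.a ⟨m - 1, by omega⟩, Or.inl ⟨m, by omega, h3, rfl⟩, ?_⟩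
          have := hle (EVar.a ⟨m - 1, by omega⟩)
          simp only [Finsupp.add_apply, Finsupp.single_apply, EVar.a.injEq, EVar.b.injEq,
            Fin.mk.injEq, reduceCtorEq, if_true, if_false, ite_true, ite_false] at this
          split_ifs at this <;> omega
      · refine ⟨EVar.a ⟨m - 1, by omega⟩, Or.inl ⟨m, h1, h2, rfl⟩, ?_⟩
        have := hle (EVar.a ⟨m - 1, by omega⟩)
        simp only [Finsupp.add_apply, Finsupp.single_apply, EVar.a.injEq, EVar.b.injEq,
          Fin.mk.injEq, reduceCtorEq, if_true, if_false, ite_true, ite_false] at this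
        split_ifs at this <;> omega
    · rintro H u ⟨u', ⟨w, hw, rfl⟩, rfl⟩
      obtain ⟨v, hv, hvw⟩ := H w hw
      rcases hv with ⟨m, h1, h2, rfl⟩ | ⟨l, h1, h2, rfl⟩
      · refine ⟨Finsupp.single (EVar.a ⟨m - 1, by omega⟩) 1
            + Finsupp.single (EVar.b ⟨j - 1, by omega⟩) 1, Or.inr ⟨m, h1, h2, rfl⟩, ?_⟩
        calc Finsupp.single (EVar.a ⟨m - 1, by omega⟩) 1
              + Finsupp.single (EVar.b ⟨j - 1, by omega⟩) 1
            ≤ w + Finsupp.single (EVar.b ⟨j - 1, by omega⟩) 1 :=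
              add_le_add_left (Finsupp.single_le_iff.2 (by omega)) _
          _ ≤ (w + Finsupp.single (EVar.a ⟨i - 1, by omega⟩) 1)
              + Finsupp.single (EVar.b ⟨j - 1, by omega⟩) 1 :=
              add_le_add_left (self_le_add_right _ _) _
      · refine ⟨Finsupp.single (EVar.a ⟨i - 1, by omega⟩) 1
            + Finsupp.single (EVar.b ⟨l - 1, by omega⟩) 1,
            Or.inl ⟨l, i, h1, h2, hid, rfl⟩, ?_⟩
        calc Finsupp.single (EVar.a ⟨i - 1, by omega⟩) 1
              + Finsupp.single (EVar.b ⟨l - 1, by omega⟩) 1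
            = Finsupp.single (EVar.b ⟨l - 1, by omega⟩) 1
              + Finsupp.single (EVar.a ⟨i - 1, by omega⟩) 1 := add_comm _ _
          _ ≤ w + Finsupp.single (EVar.a ⟨i - 1, by omega⟩) 1 :=
              add_le_add_left (Finsupp.single_le_iff.2 (by omega)) _
          _ ≤ (w + Finsupp.single (EVar.a ⟨i - 1, by omega⟩) 1)
              + Finsupp.single (EVar.b ⟨j - 1, by omega⟩) 1 := self_le_add_right _ _
  · -- cardinality
    rw [hVset]
    have hinj : Set.InjOn (X : (EVar d r) → MvPolynomial (EVar d r) k) V :=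
      fun x _ y _ h => X_injective h
    rw [Set.ncard_image_of_injOn hinj]
    set g : ℕ → (EVar d r) := fun n => if h : n - 1 < d then
        (if n < i then EVar.b ⟨n - 1, h⟩ else EVar.a ⟨n - 1, h⟩)
      else EVar.e ⟨0, by omega⟩ with hg
    have hVimg : V = g '' (Set.Ioc i d ∪ Set.Ioo j i) := by
      ext v
      simp only [hV, hg, Set.mem_union, Set.mem_image, Set.mem_setOf_eq, Set.mem_Ioc,
        Set.mem_Ioo]
      constructor
      · rintro (⟨m, h1, h2, rfl⟩ | ⟨l, h1, h2, rfl⟩)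
        · exact ⟨m, Or.inl ⟨h1, h2⟩, by
            rw [dif_pos (show m - 1 < d by omega), if_neg (by omega)]⟩
        · exact ⟨l, Or.inr ⟨h1, h2⟩, by
            rw [dif_pos (show l - 1 < d by omega), if_pos (by omega)]⟩
      · rintro ⟨n, (⟨h1, h2⟩ | ⟨h1, h2⟩), rfl⟩
        · refine Or.inl ⟨n, h1, h2, ?_⟩
          rw [dif_pos (show n - 1 < d by omega), if_neg (by omega)]
        · refine Or.inr ⟨n, h1, h2, ?_⟩
          rw [dif_pos (show n - 1 < d by omega), if_pos (by omega)]
    have hginj : Set.InjOn g (Set.Ioc i d ∪ Set.Ioo j i) := by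
      intro x hx y hy hxy
      simp only [Set.mem_union, Set.mem_Ioc, Set.mem_Ioo] at hx hy
      simp only [hg] at hxy
      rw [dif_pos (show x - 1 < d by omega), dif_pos (show y - 1 < d by omega)] at hxy
      by_cases hxi : x < i <;> by_cases hyi : y < i <;>
        simp only [if_pos, if_neg, hxi, hyi, ite_true, ite_false, EVar.a.injEq,
          EVar.b.injEq, Fin.mk.injEq, reduceCtorEq] at hxy <;> omega
    rw [hVimg, Set.ncard_image_of_injOn hginj,
      Set.ncard_union_eq (Set.disjoint_left.2 (by
        intro n h1 h2
        simp only [Set.mem_Ioc, Set.mem_Ioo] at h1 h2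
        omega)) (Set.finite_Ioc i d) (Set.finite_Ioo j i)]
    have h1 : (Set.Ioc i d).ncard = d - i := by simp [Set.ncard_eq_toFinset_card']
    have h2 : (Set.Ioo j i).ncard = i - j - 1 := by simp [Set.ncard_eq_toFinset_card']
    omega
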